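/- Let K be a field of characteristic zero containing a primitive cube root of unity. Let α ∈ K^× be an element that is not a square in K, let M = K(s) where s² = α (a quadratic field extension of K), and let σ denote the nontrivial K-automorphism of M. Suppose β ∈ M^× is not a cube in M but β·σ(β) is a cube in K^×. Then the field L = M(r) = K(s, r), where r³ = β, is a Galois extension of K of degree 6 whose Galois group Gal(L/K) is isomorphic to the symmetric group S₃ on three letters. -/

import Mathlib

open Polynomial Subgroup IntermediateField

/-- `Equiv.permCongr` as a `MulEquiv`. -/
def permCongrMulEquiv {α β : Type*} (e : α ≃ β) : Equiv.Perm α ≃* Equiv.Perm β where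
  toEquiv := e.permCongr
  map_mul' p q := by
    ext b
    simp [Equiv.permCongr_apply]

lemma nonabelian_order_six {G : Type*} [Group G] [Fintype G] (h6 : Nat.card G = 6)
    (hna : ∃ a b : G, a * b ≠ b * a) : Nonempty (G ≃* Equiv.Perm (Fin 3)) := by
  classical
  haveI : Fact (Nat.Prime 2) := ⟨by norm_num⟩
  obtain ⟨τ, hτ⟩ := exists_prime_orderOf_dvd_card 2
    (by rw [Nat.card_eq_fintype_card] at h6; rw [h6]; norm_num)
  set H := Subgroup.zpowers τ with hH
  have hτ2 : τ ^ 2 = 1 := by rw [← hτ]; exact pow_orderOf_eq_one τ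
  have hτ1 : τ ≠ 1 := by
    intro h
    rw [h, orderOf_one] at hτ
    norm_num at hτ
  have hcardH : Nat.card H = 2 := by rw [hH, Nat.card_zpowers, hτ]
  have hmemH : ∀ g ∈ H, g = 1 ∨ g = τ := by
    intro g hg
    obtain ⟨k, hk⟩ := Subgroup.mem_zpowers_iff.mp hg
    have h2 : τ ^ (2 : ℤ) = 1 := by rw [zpow_two, ← pow_two]; exact hτ2
    rcases Int.even_or_odd k with ⟨c, hc⟩ | ⟨c, hc⟩
    · left
      rw [← hk, hc]
      have : τ ^ (c + c) = (τ ^ (2:ℤ)) ^ c := by group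
      rw [this, h2, one_zpow]
    · right
      rw [← hk, hc]
      have : τ ^ (2 * c + 1) = (τ ^ (2:ℤ)) ^ c * τ := by group
      rw [this, h2, one_zpow, one_mul]
  have hcardQ : Nat.card (G ⧸ H) = 3 := by
    have := Subgroup.card_eq_card_quotient_mul_card_subgroup H
    rw [h6, hcardH] at this
    omega
  set φ := MulAction.toPermHom G (G ⧸ H) with hφ
  have hker : φ.ker = ⊥ := by
    by_contra hkerne
    obtain ⟨g, hgker, hg1⟩ := (Subgroup.bot_or_exists_ne_one φ.ker).resolve_left hkerne
    have hgfix : ∀ x : G, g • (QuotientGroup.mk x : G ⧸ H) = QuotientGroup.mk x := by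
      intro x
      have := MonoidHom.mem_ker.mp hgker
      exact congrFun (congrArg (·.toFun) this) _
    have hgH : ∀ x : G, x⁻¹ * g * x ∈ H := by
      intro x
      have h1 := hgfix x
      rw [MulAction.Quotient.smul_mk] at h1
      have h2 : (g • x)⁻¹ * x ∈ H := QuotientGroup.eq.mp h1
      have h3 : x⁻¹ * g⁻¹ * x ∈ H := by
        simpa [smul_eq_mul, mul_assoc] using h2
      have h4 := H.inv_mem h3
      simpa [mul_assoc] using h4
    have hgHmem : g ∈ H := by
      have := hgH 1
      simpa using this
    have hgτ : g = τ := (hmemH g hgHmem).resolve_left hg1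
    have hτcen : τ ∈ Subgroup.center G := by
      rw [Subgroup.mem_center_iff]
      intro x
      have h1 := hgH x
      rw [hgτ] at h1
      rcases hmemH _ h1 with h | h
      · exfalso
        apply hτ1
        calc τ = x * (x⁻¹ * τ * x) * x⁻¹ := by group
          _ = x * 1 * x⁻¹ := by rw [h]
          _ = 1 := by group
      · have hcomm : τ * x = x * τ := by
          calc τ * x = x * (x⁻¹ * τ * x) := by group
            _ = x * τ := by rw [h]
        exact hcomm.symm
    obtain ⟨a, b, hab⟩ := hna
    apply hab
    have hcenge2 : 2 ≤ Nat.card (Subgroup.center G) := by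
      haveI : Nontrivial (Subgroup.center G) :=
        ⟨⟨τ, hτcen⟩, ⟨1, Subgroup.one_mem _⟩, fun hc => hτ1 (congrArg Subtype.val hc)⟩
      exact Finite.one_lt_card
    have hq := Subgroup.card_eq_card_quotient_mul_card_subgroup (Subgroup.center G)
    rw [h6] at hq
    set q := Nat.card (G ⧸ Subgroup.center G) with hqdef
    have hq3 : q = 1 ∨ q = 2 ∨ q = 3 := by
      rcases Nat.lt_or_ge q 4 with h | h
      · interval_cases q <;> omega
      · exfalso; nlinarith [hcenge2]
    haveI : IsCyclic (G ⧸ Subgroup.center G) := by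
      rcases hq3 with h | h | h
      · have : Subsingleton (G ⧸ Subgroup.center G) :=
          Nat.card_eq_one_iff_unique.mp h |>.1
        infer_instance
      · exact isCyclic_of_prime_card (p := 2) h
      · exact isCyclic_of_prime_card (p := 3) h
    exact commutative_of_cyclic_center_quotient (QuotientGroup.mk' _) (le_of_eq (QuotientGroup.ker_mk' _)) a b
  have hinj : Function.Injective φ := (MonoidHom.ker_eq_bot_iff φ).mp hker
  haveI : Fintype (G ⧸ H) := Fintype.ofFinite _
  have e3 : G ⧸ H ≃ Fin 3 := by
    apply Fintype.equivFinOfCardEq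
    rw [← Nat.card_eq_fintype_card, hcardQ]
  let ψ : G →* Equiv.Perm (Fin 3) := (permCongrMulEquiv e3).toMonoidHom.comp φ
  have hψinj : Function.Injective ψ :=
    (permCongrMulEquiv e3).injective.comp hinj
  have hbij : Function.Bijective ψ := by
    rw [Fintype.bijective_iff_injective_and_card]
    refine ⟨hψinj, ?_⟩
    have h6' : Fintype.card G = 6 := by rw [← Nat.card_eq_fintype_card, h6]
    rw [h6', Fintype.card_perm]
    simp [Nat.factorial]
  exact ⟨MulEquiv.ofBijective ψ hbij⟩

/-- factorization of `y³ - d³` when the field contains a primitive cube root of unity. -/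
lemma cube_factor {F : Type*} [Field F] (w d y : F) (h1 : 1 + w + w ^ 2 = 0) (h2 : w ^ 3 = 1)
    (h : y ^ 3 = d ^ 3) : y = d ∨ y = w * d ∨ y = w ^ 2 * d := by
  have key : (y - d) * (y - w * d) * (y - w ^ 2 * d) = 0 := by
    linear_combination h + (w * d ^ 2 * y - d * y ^ 2) * h1 + (- d ^ 3) * h2
  rcases mul_eq_zero.mp key with h' | h'
  · rcases mul_eq_zero.mp h' with h'' | h''
    · exact Or.inl (by linear_combination h'')
    · exact Or.inr (Or.inl (by linear_combination h''))
  · exact Or.inr (Or.inr (by linear_combination h'))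

/-- splitting of `X³ - C (d³)` when the field contains a primitive cube root of unity. -/
lemma cubic_split {F : Type*} [Field F] (w d : F) (h1 : 1 + w + w ^ 2 = 0) (h2 : w ^ 3 = 1) :
    (X - C d) * (X - C (w * d)) * (X - C (w ^ 2 * d)) = X ^ 3 - C (d ^ 3) := by
  have h1' : (1 : F[X]) + C w + C w ^ 2 = 0 := by
    have := congrArg C h1
    simpa [map_add, map_pow] using this
  have h2' : (C w : F[X]) ^ 3 = 1 := by
    have := congrArg C h2
    simpa [map_pow] using this
  simp only [C_mul, C_pow]
  linear_combination (C w * C d ^ 2 * X - C d * X ^ 2) * h1' + (- C d ^ 3) * h2'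

theorem stmt_8 {K : Type*} [Field K] [CharZero K] (ω : K) (hω : IsPrimitiveRoot ω 3)
    {M : Type*} [Field M] [Algebra K M]
    (α : K) (hα0 : α ≠ 0) (hα : ¬∃ x : K, x ^ 2 = α)
    (s : M) (hs : s ^ 2 = algebraMap K M α) (hMgen : Algebra.adjoin K {s} = ⊤)
    (σ : M ≃ₐ[K] M) (hσ : σ s = -s)
    {L : Type*} [Field L] [Algebra K L] [Algebra M L] [IsScalarTower K M L]
    (β : M) (hβ0 : β ≠ 0) (hβ : ¬∃ x : M, x ^ 3 = β)
    (hββ : ∃ γ : K, γ ≠ 0 ∧ β * σ β = algebraMap K M γ ^ 3)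
    (r : L) (hr : r ^ 3 = algebraMap M L β) (hLgen : Algebra.adjoin M {r} = ⊤) :
    IsGalois K L ∧ Module.finrank K L = 6 ∧
      Nonempty ((L ≃ₐ[K] L) ≃* Equiv.Perm (Fin 3)) := by
  classical
  obtain ⟨γ, hγ0, hγ⟩ := hββ
  -- basic facts about ω
  have hω3 : ω ^ 3 = 1 := hω.pow_eq_one
  have hω1 : ω ≠ 1 := hω.ne_one (by norm_num)
  have hωsum : 1 + ω + ω ^ 2 = 0 := by
    have h0 : (ω - 1) * (1 + ω + ω ^ 2) = 0 := by linear_combination hω3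
    rcases mul_eq_zero.mp h0 with h' | h'
    · exact absurd (by linear_combination h') hω1
    · exact h'
  have hω2 : ω ^ 2 ≠ 1 := by
    intro h
    exact hω1 (by linear_combination hω3 - ω * h)
  -- maps
  have hKM : Function.Injective (algebraMap K M) := (algebraMap K M).injective
  have hML : Function.Injective (algebraMap M L) := (algebraMap M L).injective
  have hKL : Function.Injective (algebraMap K L) := (algebraMap K L).injective
  have htow : ∀ c : K, algebraMap M L (algebraMap K M c) = algebraMap K L c :=
    fun c => (IsScalarTower.algebraMap_apply K M L c).symm
  haveI : CharZero M := charZero_of_injective_algebraMap hKM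
  -- ω in L
  set ωL := algebraMap K L ω with hωLdef
  have h1L : 1 + ωL + ωL ^ 2 = 0 := by
    have := congrArg (algebraMap K L) hωsum
    simpa [map_add, map_pow] using this
  have h2L : ωL ^ 3 = 1 := by
    have := congrArg (algebraMap K L) hω3
    simpa [map_pow] using this
  have hω2L : ωL ^ 2 ≠ 1 := fun h => hω2 (hKL (by rw [map_pow, map_one]; exact h))
  have hω1L : ωL ≠ 1 := fun h => hω1 (hKL (by rw [map_one]; exact h))
  -- every element of M is a + b s
  have hrep : ∀ m : M, ∃ a b : K, m = algebraMap K M a + algebraMap K M b * s := by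
    intro m
    have hm : m ∈ Algebra.adjoin K {s} := hMgen ▸ Algebra.mem_top
    induction hm using Algebra.adjoin_induction with
    | mem x hx =>
      rcases hx with rfl
      exact ⟨0, 1, by simp⟩
    | algebraMap c => exact ⟨c, 0, by simp⟩
    | add x y hx hy ihx ihy =>
      obtain ⟨a1, b1, h1⟩ := ihx
      obtain ⟨a2, b2, h2⟩ := ihy
      exact ⟨a1 + a2, b1 + b2, by rw [h1, h2, map_add, map_add]; ring⟩
    | mul x y hx hy ihx ihy =>
      obtain ⟨a1, b1, h1⟩ := ihx
      obtain ⟨a2, b2, h2⟩ := ihy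
      refine ⟨a1 * a2 + b1 * b2 * α, a1 * b2 + b1 * a2, ?_⟩
      rw [h1, h2]
      simp only [map_add, map_mul]
      linear_combination (algebraMap K M b1 * algebraMap K M b2) * hs
  obtain ⟨a, b, hab⟩ := hrep β
  -- β is not in K
  have hbne : b ≠ 0 := by
    intro hb0
    rw [hb0] at hab
    simp only [map_zero, zero_mul, add_zero] at hab
    -- then σ β = β and β² = γ³ in K, so β is a cube in K: contradiction
    have hσβ : σ β = β := by rw [hab]; exact σ.commutes a
    rw [hσβ, hab, ← map_mul, ← map_pow] at hγ
    have ha2 : a * a = γ ^ 3 := hKM hγ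
    have ha0 : a ≠ 0 := by
      intro h
      rw [h, map_zero] at hab
      exact hβ0 hab
    apply hβ
    refine ⟨algebraMap K M (γ ^ 2 / a), ?_⟩
    rw [← map_pow, hab]
    congr 1
    field_simp
    linear_combination (-(γ ^ 3) - a * a) * ha2
  have hσβ : σ β = algebraMap K M a - algebraMap K M b * s := by
    rw [hab, map_add, map_mul, σ.commutes, σ.commutes, hσ]
    ring
  -- products and sums in K
  have hprod : β * σ β = algebraMap K M (a ^ 2 - α * b ^ 2) := by
    rw [hσβ, hab, map_sub, map_pow, map_mul, map_pow]
    linear_combination (- (algebraMap K M b) ^ 2) * hs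
  have hγ3 : γ ^ 3 = a ^ 2 - α * b ^ 2 := hKM (by rw [map_pow, ← hγ, hprod])
  -- minimal polynomial of r over M
  have hirr : Irreducible (X ^ 3 - C β : M[X]) :=
    X_pow_sub_C_irreducible_of_prime Nat.prime_three (fun x hx => hβ ⟨x, hx⟩)
  have haev : (Polynomial.aeval r) (X ^ 3 - C β : M[X]) = 0 := by
    rw [map_sub, map_pow, aeval_X, aeval_C, hr, sub_self]
  have hrint : IsIntegral M r :=
    ⟨X ^ 3 - C β, monic_X_pow_sub_C β (by norm_num), by simpa [Polynomial.aeval_def] using haev⟩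
  have hminr : minpoly M r = X ^ 3 - C β :=
    (minpoly.eq_of_irreducible_of_monic hirr haev (monic_X_pow_sub_C β (by norm_num))).symm
  -- degree of L over M
  have hMrtop : IntermediateField.adjoin M {r} = ⊤ := by
    apply IntermediateField.toSubalgebra_injective
    rw [IntermediateField.top_toSubalgebra]
    rw [show IntermediateField.adjoin M {r} = M⟮r⟯ from rfl]
    rw [IntermediateField.adjoin_simple_toSubalgebra_of_isAlgebraic hrint.isAlgebraic, hLgen]
  haveI hFDL : FiniteDimensional M L := by
    haveI := IntermediateField.adjoin.finiteDimensional hrint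
    rw [hMrtop] at this
    exact (IntermediateField.topEquiv (F := M) (E := L)).toLinearEquiv.finiteDimensional
  have hfinML : Module.finrank M L = 3 := by
    have h1 := IntermediateField.adjoin.finrank hrint
    rw [hminr, natDegree_X_pow_sub_C] at h1
    rw [show M⟮r⟯ = IntermediateField.adjoin M {r} from rfl, hMrtop] at h1
    rw [← IntermediateField.finrank_top' (F := M) (E := L), h1]
  -- degree of M over K
  have hsirr : Irreducible (X ^ 2 - C α : K[X]) :=
    X_pow_sub_C_irreducible_of_prime Nat.prime_two (fun x hx => hα ⟨x, hx⟩)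
  have hsaev : (Polynomial.aeval s) (X ^ 2 - C α : K[X]) = 0 := by
    rw [map_sub, map_pow, aeval_X, aeval_C, hs, sub_self]
  have hsint : IsIntegral K s :=
    ⟨X ^ 2 - C α, monic_X_pow_sub_C α (by norm_num), by simpa [Polynomial.aeval_def] using hsaev⟩
  have hmins : minpoly K s = X ^ 2 - C α :=
    (minpoly.eq_of_irreducible_of_monic hsirr hsaev (monic_X_pow_sub_C α (by norm_num))).symm
  have hKstop : IntermediateField.adjoin K {s} = ⊤ := by
    apply IntermediateField.toSubalgebra_injective
    rw [IntermediateField.top_toSubalgebra]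
    rw [show IntermediateField.adjoin K {s} = K⟮s⟯ from rfl]
    rw [IntermediateField.adjoin_simple_toSubalgebra_of_isAlgebraic hsint.isAlgebraic, hMgen]
  haveI hFDM : FiniteDimensional K M := by
    haveI := IntermediateField.adjoin.finiteDimensional hsint
    rw [hKstop] at this
    exact (IntermediateField.topEquiv (F := K) (E := M)).toLinearEquiv.finiteDimensional
  have hfinKM : Module.finrank K M = 2 := by
    have h1 := IntermediateField.adjoin.finrank hsint
    rw [hmins, natDegree_X_pow_sub_C] at h1
    rw [show K⟮s⟯ = IntermediateField.adjoin K {s} from rfl, hKstop] at h1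
    rw [← IntermediateField.finrank_top' (F := K) (E := M), h1]
  haveI : FiniteDimensional K L := FiniteDimensional.trans K M L
  have hfinKL : Module.finrank K L = 6 := by
    rw [← Module.finrank_mul_finrank K M L, hfinKM, hfinML]
  -- elements in L
  set B := algebraMap M L β with hBdef
  set B' := algebraMap M L (σ β) with hB'def
  set sL := algebraMap M L s with hsLdef
  set c := algebraMap K L γ with hcdef
  have hc0 : c ≠ 0 := fun h => hγ0 (hKL (by rw [← hcdef, h, map_zero]))
  have hB0 : B ≠ 0 := fun h => hβ0 (hML (by rw [← hBdef, h, map_zero]))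
  have hr0 : r ≠ 0 := by
    intro h
    rw [h, zero_pow (by norm_num)] at hr
    exact hB0 hr.symm
  have hωL0 : ωL ≠ 0 := by
    intro h
    rw [h, zero_pow (by norm_num)] at h2L
    exact zero_ne_one h2L
  have hBrep : B = algebraMap K L a + algebraMap K L b * sL := by
    rw [hBdef, hab, map_add, map_mul, htow, htow, hsLdef]
  have hB'rep : B' = algebraMap K L a - algebraMap K L b * sL := by
    rw [hB'def, hσβ, map_sub, map_mul, htow, htow, hsLdef]
  have hBsum : B + B' = algebraMap K L (2 * a) := by
    rw [hBrep, hB'rep, map_mul]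
    have h2 : algebraMap K L 2 = 2 := map_ofNat _ 2
    rw [h2]; ring
  have hBprod : B * B' = algebraMap K L (a ^ 2 - α * b ^ 2) := by
    rw [hBdef, hB'def, ← map_mul, hprod, htow]
  have hBprodγ : B * B' = c ^ 3 := by
    rw [hBdef, hB'def, ← map_mul, hγ, map_pow, htow, hcdef]
  have hs2L : sL ^ 2 = algebraMap K L α := by rw [hsLdef, ← map_pow, hs, htow]
  set t := c / r with htdef
  have htr : t * r = c := div_mul_cancel₀ c hr0
  have ht3 : t ^ 3 = B' := by
    rw [htdef, div_pow, hr, ← hBprodγ]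
    exact mul_div_cancel_left₀ B' hB0
  have ht0 : t ≠ 0 := div_ne_zero hc0 hr0
  -- the splitting polynomial over K
  set p : K[X] := X ^ 6 - C (2 * a) * X ^ 3 + C (a ^ 2 - α * b ^ 2) with hpdef
  have hpmap : p.map (algebraMap K L) = (X ^ 3 - C B) * (X ^ 3 - C B') := by
    rw [hpdef]
    simp only [Polynomial.map_add, Polynomial.map_sub, Polynomial.map_mul, Polynomial.map_pow,
      Polynomial.map_X, Polynomial.map_C]
    rw [← hBsum, ← hBprod, C_add, C_mul]
    ring
  have hcubB : (X ^ 3 - C B : L[X]) = (X - C r) * (X - C (ωL * r)) * (X - C (ωL ^ 2 * r)) := by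
    rw [cubic_split ωL r h1L h2L, hr]
  have hcubB' : (X ^ 3 - C B' : L[X]) = (X - C t) * (X - C (ωL * t)) * (X - C (ωL ^ 2 * t)) := by
    rw [cubic_split ωL t h1L h2L, ht3]
  have hsplits : (p.map (algebraMap K L)).Splits := by
    rw [hpmap, hcubB, hcubB']
    repeat' apply Polynomial.Splits.mul
    all_goals exact Polynomial.Splits.X_sub_C _
  have hp0 : p ≠ 0 := by
    intro h
    have hmap0 : p.map (algebraMap K L) = 0 := by rw [h, Polynomial.map_zero]
    rw [hpmap] at hmap0
    exact ((monic_X_pow_sub_C B (by norm_num)).mul (monic_X_pow_sub_C B' (by norm_num))).ne_zero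
      hmap0
  have haevr : (Polynomial.aeval r) p = 0 := by
    have hcalc : (Polynomial.aeval r) p = (r ^ 3 - B) * (r ^ 3 - B') := by
      rw [hpdef]
      simp only [map_add, map_sub, map_mul, map_pow, aeval_X, aeval_C, map_ofNat]
      rw [hBrep, hB'rep]
      linear_combination (algebraMap K L b) ^ 2 * hs2L
    rw [hcalc, hr, sub_self, zero_mul]
  have hrmem : r ∈ p.rootSet L := by
    rw [Polynomial.mem_rootSet]
    exact ⟨hp0, haevr⟩
  have hbL0 : algebraMap K L b ≠ 0 := fun h => hbne (hKL (by rw [h, map_zero]))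
  have hadj : Algebra.adjoin K (p.rootSet L) = ⊤ := by
    rw [eq_top_iff]
    have hrA : r ∈ Algebra.adjoin K (p.rootSet L) := Algebra.subset_adjoin hrmem
    have hsA : sL ∈ Algebra.adjoin K (p.rootSet L) := by
      have hseq : sL = (algebraMap K L b)⁻¹ * (r ^ 3 - algebraMap K L a) := by
        rw [hr, hBrep]
        field_simp
        ring
      rw [hseq, ← map_inv₀]
      exact Subalgebra.mul_mem _ (Subalgebra.algebraMap_mem _ _)
        (Subalgebra.sub_mem _ (Subalgebra.pow_mem _ hrA 3) (Subalgebra.algebraMap_mem _ _))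
    have hMsub : ∀ m : M, algebraMap M L m ∈ Algebra.adjoin K (p.rootSet L) := by
      intro m
      obtain ⟨a', b', hm⟩ := hrep m
      rw [hm, map_add, map_mul, htow, htow]
      exact Subalgebra.add_mem _ (Subalgebra.algebraMap_mem _ _)
        (Subalgebra.mul_mem _ (Subalgebra.algebraMap_mem _ _) hsA)
    intro x hxtop
    clear hxtop
    have hx : x ∈ Algebra.adjoin M {r} := hLgen ▸ Algebra.mem_top
    induction hx using Algebra.adjoin_induction with
    | mem y hy =>
      rcases hy with rfl
      exact hrA
    | algebraMap m => exact hMsub m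
    | add y z hy hz ihy ihz => exact Subalgebra.add_mem _ ihy ihz
    | mul y z hy hz ihy ihz => exact Subalgebra.mul_mem _ ihy ihz
  haveI hsfK : Polynomial.IsSplittingField K L p := ⟨hsplits, hadj⟩
  haveI : Normal K L := Normal.of_isSplittingField p
  haveI : IsGalois K L := ⟨⟩
  -- L is Galois over M as well
  have hsplitsM : ((X ^ 3 - C β : M[X]).map (algebraMap M L)).Splits := by
    have hmq : (X ^ 3 - C β : M[X]).map (algebraMap M L) = X ^ 3 - C B := by
      simp only [Polynomial.map_sub, Polynomial.map_pow, Polynomial.map_X, Polynomial.map_C,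
        hBdef]
    rw [hmq, hcubB]
    repeat' apply Polynomial.Splits.mul
    all_goals exact Polynomial.Splits.X_sub_C _
  have hadjM : Algebra.adjoin M ((X ^ 3 - C β : M[X]).rootSet L) = ⊤ := by
    rw [eq_top_iff, ← hLgen]
    apply Algebra.adjoin_mono
    intro y hy
    rcases hy with rfl
    rw [Polynomial.mem_rootSet]
    exact ⟨(monic_X_pow_sub_C β (by norm_num)).ne_zero, haev⟩
  haveI hsfM : Polynomial.IsSplittingField M L (X ^ 3 - C β) := ⟨hsplitsM, hadjM⟩
  haveI : Normal M L := Normal.of_isSplittingField (X ^ 3 - C β : M[X])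
  haveI : IsGalois M L := ⟨⟩
  -- a nontrivial automorphism of L over M
  have hcardM : Fintype.card (L ≃ₐ[M] L) = 3 :=
    Nat.card_eq_fintype_card.symm.trans ((IsGalois.card_aut_eq_finrank M L).trans hfinML)
  obtain ⟨g₀, hg₀⟩ := Fintype.exists_ne_of_one_lt_card (by rw [hcardM]; norm_num)
    (1 : L ≃ₐ[M] L)
  have hg₀r3 : (g₀ r) ^ 3 = r ^ 3 := by
    calc (g₀ r) ^ 3 = g₀ (r ^ 3) := (map_pow g₀ r 3).symm
      _ = g₀ B := by rw [hr]
      _ = B := by rw [hBdef]; exact g₀.commutes β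
      _ = r ^ 3 := hr.symm
  have hg₀ne : g₀ r ≠ r := by
    intro h
    apply hg₀
    have hfix : ∀ x : L, g₀ x = x := by
      intro x
      have hx : x ∈ Algebra.adjoin M {r} := hLgen ▸ Algebra.mem_top
      induction hx using Algebra.adjoin_induction with
      | mem y hy => rcases hy with rfl; exact h
      | algebraMap m => exact g₀.commutes m
      | add y z hy hz ihy ihz => rw [map_add, ihy, ihz]
      | mul y z hy hz ihy ihz => rw [map_mul, ihy, ihz]
    exact AlgEquiv.ext fun x => (hfix x).trans (AlgEquiv.one_apply x).symm
  have hgr0 : g₀ r = ωL * r ∨ g₀ r = ωL ^ 2 * r :=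
    (cube_factor ωL r (g₀ r) h1L h2L hg₀r3).resolve_left hg₀ne
  set g : L ≃ₐ[K] L := AlgEquiv.restrictScalars K g₀ with hgdef
  have hgapp : ∀ x : L, g x = g₀ x := fun x => rfl
  -- an automorphism moving sL
  have hcardK : Fintype.card (L ≃ₐ[K] L) = 6 :=
    Nat.card_eq_fintype_card.symm.trans ((IsGalois.card_aut_eq_finrank K L).trans hfinKL)
  have hsL0 : sL ≠ 0 := by
    intro h
    rw [h, zero_pow (by norm_num)] at hs2L
    exact hα0 (hKL (by rw [map_zero, hs2L]))
  obtain ⟨h, hh⟩ : ∃ h : L ≃ₐ[K] L, h sL = -sL := by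
    have hexists : ∃ h : L ≃ₐ[K] L, h sL ≠ sL := by
      by_contra hall
      push_neg at hall
      have hmem : sL ∈ IntermediateField.fixedField (⊤ : Subgroup (L ≃ₐ[K] L)) := by
        intro gg
        exact hall gg.1
      have hbot : IntermediateField.fixedField (⊤ : Subgroup (L ≃ₐ[K] L)) = ⊥ :=
        ((IsGalois.tfae (F := K) (E := L)).out 0 1).mp ‹IsGalois K L›
      rw [hbot, IntermediateField.mem_bot] at hmem
      obtain ⟨cc, hcc⟩ := hmem
      exact hα ⟨cc, hKL (by rw [map_pow, hcc, hs2L])⟩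
    obtain ⟨h, hne⟩ := hexists
    have h2 : (h sL) ^ 2 = sL ^ 2 := by
      calc (h sL) ^ 2 = h (sL ^ 2) := (map_pow h sL 2).symm
        _ = h (algebraMap K L α) := by rw [hs2L]
        _ = algebraMap K L α := h.commutes α
        _ = sL ^ 2 := hs2L.symm
    have hfac : (h sL - sL) * (h sL + sL) = 0 := by linear_combination h2
    rcases mul_eq_zero.mp hfac with h' | h'
    · exact absurd (by linear_combination h') hne
    · exact ⟨h, by linear_combination h'⟩
  -- h sends r to a root of X³ - B'
  have hhr3 : (h r) ^ 3 = t ^ 3 := by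
    rw [ht3]
    calc (h r) ^ 3 = h (r ^ 3) := (map_pow h r 3).symm
      _ = h B := by rw [hr]
      _ = B' := by
          rw [hBrep, hB'rep, map_add, map_mul, h.commutes, h.commutes, hh]
          ring
  have hhrcases := cube_factor ωL t (h r) h1L h2L hhr3
  obtain ⟨j, hj⟩ : ∃ j : ℕ, h r = ωL ^ j * t := by
    rcases hhrcases with h' | h' | h'
    · exact ⟨0, by simpa using h'⟩
    · exact ⟨1, by simpa using h'⟩
    · exact ⟨2, h'⟩
  obtain ⟨i, hi12, hi⟩ : ∃ i : ℕ, ωL ^ (2 * i) ≠ 1 ∧ g r = ωL ^ i * r := by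
    rcases hgr0 with h' | h'
    · refine ⟨1, ?_, by rw [hgapp, h', pow_one]⟩
      simpa using hω2L
    · refine ⟨2, ?_, by rw [hgapp, h']⟩
      intro hcon
      apply hω1L
      have h4 : ωL ^ 4 = ωL := by
        calc ωL ^ 4 = ωL ^ 3 * ωL := by ring
          _ = ωL := by rw [h2L, one_mul]
      rw [show 2 * 2 = 4 from rfl, h4] at hcon
      exact hcon
  -- the two automorphisms do not commute
  have hgω : g ωL = ωL := g.commutes ω
  have hhω : h ωL = ωL := h.commutes ω
  have hgtrel : g t * (ωL ^ i * r) = c := by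
    rw [← hi, ← map_mul, htr]
    exact g.commutes γ
  have hnoncomm : g * h ≠ h * g := by
    intro heq
    have heqr : g (h r) = h (g r) := by
      rw [← AlgEquiv.mul_apply, heq, AlgEquiv.mul_apply]
    rw [hj, hi, map_mul, map_mul, map_pow, map_pow, hgω, hhω, hj] at heqr
    -- heqr : ωL ^ j * g t = ωL ^ i * (ωL ^ j * t)
    have key : ωL ^ j * c = ωL ^ (2 * i) * (ωL ^ j * c) := by
      linear_combination (ωL ^ i * r) * heqr - ωL ^ j * hgtrel +
        ωL ^ (2 * i) * ωL ^ j * htr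
    have hfac : (ωL ^ (2 * i) - 1) * (ωL ^ j * c) = 0 := by linear_combination -key
    rcases mul_eq_zero.mp hfac with h' | h'
    · exact hi12 (by linear_combination h')
    · exact mul_ne_zero (pow_ne_zero j hωL0) hc0 h'
  refine ⟨inferInstance, hfinKL, ?_⟩
  apply nonabelian_order_six
  · rw [Nat.card_eq_fintype_card, hcardK]
  · exact ⟨g, h, hnoncomm⟩
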